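/- If a set Θ ⊆ ℝ^d is permeable with respect to the Euclidean norm ‖·‖₂, then Θ is permeable with respect to every norm ‖·‖ on ℝ^d. The same statement holds for finite permeability and for null permeability. -/

import Mathlib

open Set
open scoped ENNReal RealInnerProductSpace

/-- The length (total variation w.r.t. the norm-like function `N`) of a path `γ` over
`[a,b]`, as the supremum over partitions `a = t₀ ≤ t₁ ≤ … ≤ tₙ = b` of the sums of
`N`-norms of increments. -/
noncomputable def lenWith {d : ℕ} (N : EuclideanSpace ℝ (Fin d) → ℝ)
    (γ : ℝ → EuclideanSpace ℝ (Fin d)) (a b : ℝ) : ℝ≥0∞ :=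
  ⨆ n : ℕ, ⨆ t : {t : ℕ → ℝ // Monotone t ∧ t 0 = a ∧ t n = b},
    ∑ i ∈ Finset.range n, ENNReal.ofReal (N (γ (t.1 (i + 1)) - γ (t.1 i)))

/-- `Θ ⊆ ℝ^d` is null permeable w.r.t. the norm `N`. -/
def NullPermeableWith {d : ℕ} (N : EuclideanSpace ℝ (Fin d) → ℝ)
    (Θ : Set (EuclideanSpace ℝ (Fin d))) : Prop :=
  ∀ x y : EuclideanSpace ℝ (Fin d), ∀ δ : ℝ, 0 < δ →
    ∃ (a b : ℝ) (γ : ℝ → EuclideanSpace ℝ (Fin d)),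
      a < b ∧ ContinuousOn γ (Set.Icc a b) ∧ γ a = x ∧ γ b = y ∧
      lenWith N γ a b ≤ ENNReal.ofReal (N (y - x) + δ) ∧
      γ '' Set.Icc a b ∩ Θ ⊆ {x, y}

/-- `Θ ⊆ ℝ^d` is finitely permeable w.r.t. the norm `N`. -/
def FinitelyPermeableWith {d : ℕ} (N : EuclideanSpace ℝ (Fin d) → ℝ)
    (Θ : Set (EuclideanSpace ℝ (Fin d))) : Prop :=
  ∀ x y : EuclideanSpace ℝ (Fin d), ∀ δ : ℝ, 0 < δ →
    ∃ (a b : ℝ) (γ : ℝ → EuclideanSpace ℝ (Fin d)),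
      a < b ∧ ContinuousOn γ (Set.Icc a b) ∧ γ a = x ∧ γ b = y ∧
      lenWith N γ a b ≤ ENNReal.ofReal (N (y - x) + δ) ∧
      (γ '' Set.Icc a b ∩ Θ).Finite

/-- `Θ ⊆ ℝ^d` is permeable w.r.t. the norm `N`. -/
def PermeableWith {d : ℕ} (N : EuclideanSpace ℝ (Fin d) → ℝ)
    (Θ : Set (EuclideanSpace ℝ (Fin d))) : Prop :=
  ∀ x y : EuclideanSpace ℝ (Fin d), ∀ δ : ℝ, 0 < δ →
    ∃ (a b : ℝ) (γ : ℝ → EuclideanSpace ℝ (Fin d)),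
      a < b ∧ ContinuousOn γ (Set.Icc a b) ∧ γ a = x ∧ γ b = y ∧
      lenWith N γ a b ≤ ENNReal.ofReal (N (y - x) + δ) ∧
      (closure (γ '' Set.Icc a b ∩ Θ)).Countable

section Aux

variable {d : ℕ} {N : EuclideanSpace ℝ (Fin d) → ℝ}

private lemma N_nonneg (hN0 : ∀ x, N x = 0 ↔ x = 0)
    (hNsmul : ∀ (c : ℝ) (x), N (c • x) = |c| * N x)
    (hNadd : ∀ x y, N (x + y) ≤ N x + N y) (x : EuclideanSpace ℝ (Fin d)) : 0 ≤ N x := by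
  have h1 : N (x + (-x)) ≤ N x + N (-x) := hNadd x (-x)
  have h2 : N (-x) = N x := by
    have := hNsmul (-1) x
    simpa using this
  have h3 : N 0 = 0 := (hN0 0).mpr rfl
  rw [add_neg_cancel, h3, h2] at h1
  linarith

private lemma N_sum_le (hN0 : ∀ x, N x = 0 ↔ x = 0)
    (hNadd : ∀ x y, N (x + y) ≤ N x + N y) (n : ℕ) (f : ℕ → EuclideanSpace ℝ (Fin d)) :
    N (∑ i ∈ Finset.range n, f i) ≤ ∑ i ∈ Finset.range n, N (f i) := by
  induction n with
  | zero => simp [(hN0 0).mpr rfl]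
  | succ n ih =>
    rw [Finset.sum_range_succ, Finset.sum_range_succ]
    exact le_trans (hNadd _ _) (by linarith)

private lemma exists_C (hN0 : ∀ x, N x = 0 ↔ x = 0)
    (hNsmul : ∀ (c : ℝ) (x), N (c • x) = |c| * N x)
    (hNadd : ∀ x y, N (x + y) ≤ N x + N y) :
    ∃ C : ℝ, 0 < C ∧ ∀ z, N z ≤ C * ‖z‖ := by
  have hnn := N_nonneg hN0 hNsmul hNadd
  have hsum0 : 0 ≤ ∑ i, N (EuclideanSpace.single i (1:ℝ)) :=
    Finset.sum_nonneg fun i _ => hnn _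
  refine ⟨(∑ i, N (EuclideanSpace.single i (1:ℝ))) + 1, by linarith, fun z => ?_⟩
  have hdec : z = ∑ i, z i • EuclideanSpace.single i (1:ℝ) := by
    ext j
    rw [WithLp.ofLp_sum, Finset.sum_apply]
    simp [EuclideanSpace.single_apply]
  have habs : ∀ i, |z i| ≤ ‖z‖ := by
    intro i
    have h := abs_real_inner_le_norm (EuclideanSpace.single i (1:ℝ)) z
    simpa [EuclideanSpace.inner_single_left, EuclideanSpace.norm_single] using h
  have hsub : N (∑ i : Fin d, z i • EuclideanSpace.single i (1:ℝ)) ≤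
      ∑ i : Fin d, N (z i • EuclideanSpace.single i (1:ℝ)) := by
    classical
    induction (Finset.univ : Finset (Fin d)) using Finset.induction with
    | empty => simp [(hN0 0).mpr rfl]
    | insert _ _ hx ih =>
      rw [Finset.sum_insert hx, Finset.sum_insert hx]
      exact le_trans (hNadd _ _) (by linarith)
  calc N z = N (∑ i : Fin d, z i • EuclideanSpace.single i (1:ℝ)) := by rw [← hdec]
    _ ≤ ∑ i : Fin d, N (z i • EuclideanSpace.single i (1:ℝ)) := hsub
    _ = ∑ i : Fin d, |z i| * N (EuclideanSpace.single i (1:ℝ)) := by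
        simp only [hNsmul]
    _ ≤ ∑ i : Fin d, ‖z‖ * N (EuclideanSpace.single i (1:ℝ)) := by
        refine Finset.sum_le_sum fun i _ => mul_le_mul_of_nonneg_right (habs i) (hnn _)
    _ = (∑ i, N (EuclideanSpace.single i (1:ℝ))) * ‖z‖ := by
        rw [← Finset.mul_sum, mul_comm]
    _ ≤ ((∑ i, N (EuclideanSpace.single i (1:ℝ))) + 1) * ‖z‖ := by
        have := norm_nonneg z; nlinarith

private lemma key_partition (hN0 : ∀ x, N x = 0 ↔ x = 0)
    (hNsmul : ∀ (c : ℝ) (x), N (c • x) = |c| * N x)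
    (hNadd : ∀ x y, N (x + y) ≤ N x + N y)
    {C : ℝ} (hC0 : 0 < C) (hC : ∀ z, N z ≤ C * ‖z‖)
    (n : ℕ) (v : ℕ → EuclideanSpace ℝ (Fin d)) {Δ : ℝ} (hΔ : 0 ≤ Δ)
    (h : ∑ i ∈ Finset.range n, ‖v i‖ ≤ ‖∑ i ∈ Finset.range n, v i‖ + Δ) :
    ∑ i ∈ Finset.range n, N (v i) ≤
      N (∑ i ∈ Finset.range n, v i) + 2*C*Δ +
        C * Real.sqrt (2*(‖∑ i ∈ Finset.range n, v i‖ + Δ)*Δ) := by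
  have hnn := N_nonneg hN0 hNsmul hNadd
  set s := ∑ i ∈ Finset.range n, v i with hs_def
  by_cases hs : s = 0
  · -- degenerate case: the total displacement is 0
    have h1 : ∑ i ∈ Finset.range n, N (v i) ≤ C * Δ := by
      calc ∑ i ∈ Finset.range n, N (v i) ≤ ∑ i ∈ Finset.range n, C * ‖v i‖ :=
            Finset.sum_le_sum fun i _ => hC _
        _ = C * ∑ i ∈ Finset.range n, ‖v i‖ := by rw [Finset.mul_sum]
        _ ≤ C * Δ := by
            have := h; rw [hs, norm_zero, zero_add] at this
            exact mul_le_mul_of_nonneg_left this hC0.le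
    have hsqrt : 0 ≤ C * Real.sqrt (2*(‖s‖ + Δ)*Δ) :=
      mul_nonneg hC0.le (Real.sqrt_nonneg _)
    have hNs : 0 ≤ N s := hnn s
    nlinarith
  · have hsn : 0 < ‖s‖ := norm_pos_iff.mpr hs
    set u : EuclideanSpace ℝ (Fin d) := ‖s‖⁻¹ • s with hu_def
    have hu : ‖u‖ = 1 := by
      rw [hu_def, norm_smul, norm_inv, norm_norm, inv_mul_cancel₀ hsn.ne']
    set a : ℕ → ℝ := fun i => ⟪u, v i⟫ with ha_def
    set w : ℕ → EuclideanSpace ℝ (Fin d) := fun i => v i - a i • u with hw_def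
    have ha_abs : ∀ i, |a i| ≤ ‖v i‖ := fun i => by
      have := abs_real_inner_le_norm u (v i)
      rwa [hu, one_mul] at this
    have hsum_a : ∑ i ∈ Finset.range n, a i = ‖s‖ := by
      have h1 : ∑ i ∈ Finset.range n, a i = ⟪u, s⟫ := (inner_sum _ _ _).symm
      rw [h1, hu_def, real_inner_smul_left, real_inner_self_eq_norm_sq]
      field_simp
    set ε : ℕ → ℝ := fun i => ‖v i‖ - a i with hε_def
    have hε : ∀ i, 0 ≤ ε i := fun i => by
      have := ha_abs i; have := le_abs_self (a i); simp only [hε_def]; linarith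
    have hεsum : ∑ i ∈ Finset.range n, ε i ≤ Δ := by
      simp only [hε_def]
      rw [Finset.sum_sub_distrib, hsum_a]
      linarith
    have hw_norm : ∀ i, ‖w i‖ ≤ Real.sqrt (2 * ‖v i‖ * ε i) := by
      intro i
      have hsq : ‖w i‖^2 = ‖v i‖^2 - (a i)^2 := by
        have h1 : ‖v i - a i • u‖^2 = ‖v i‖^2 - 2*⟪v i, a i • u⟫ + ‖a i • u‖^2 :=
          norm_sub_sq_real _ _
        have h2 : ⟪v i, a i • u⟫ = a i * a i := by
          rw [real_inner_smul_right, real_inner_comm]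
        have h3 : ‖a i • u‖^2 = (a i)^2 := by
          rw [norm_smul, hu, mul_one, Real.norm_eq_abs, sq_abs]
        rw [hw_def]
        simp only []
        rw [h1, h2, h3]
        ring
      have hle : ‖w i‖^2 ≤ 2 * ‖v i‖ * ε i := by
        rw [hsq]
        have h4 := ha_abs i
        have h5 := abs_le.mp h4
        simp only [hε_def]
        nlinarith
      calc ‖w i‖ = Real.sqrt (‖w i‖^2) := (Real.sqrt_sq (norm_nonneg _)).symm
        _ ≤ Real.sqrt (2 * ‖v i‖ * ε i) := Real.sqrt_le_sqrt hle
    have hNu : N u ≤ C := by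
      have := hC u; rwa [hu, mul_one] at this
    have hNv : ∀ i, N (v i) ≤ N u * |a i| + C * ‖w i‖ := by
      intro i
      have h1 : v i = a i • u + w i := by
        simp only [hw_def]
        rw [add_comm, sub_add_cancel]
      calc N (v i) = N (a i • u + w i) := by rw [← h1]
        _ ≤ N (a i • u) + N (w i) := hNadd _ _
        _ = |a i| * N u + N (w i) := by rw [hNsmul]
        _ ≤ |a i| * N u + C * ‖w i‖ := by have := hC (w i); linarith
        _ = N u * |a i| + C * ‖w i‖ := by ring
    have habs_sum : ∑ i ∈ Finset.range n, |a i| ≤ ‖s‖ + 2*Δ := by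
      have h1 : ∀ i, |a i| ≤ a i + 2 * ε i := by
        intro i
        rcases abs_cases (a i) with ⟨heq, _⟩ | ⟨heq, hneg⟩
        · have := hε i; linarith [heq.le]
        · have := ha_abs i
          have h2 : 0 ≤ ‖v i‖ := norm_nonneg _
          simp only [hε_def]
          rw [heq]
          linarith
      calc ∑ i ∈ Finset.range n, |a i| ≤ ∑ i ∈ Finset.range n, (a i + 2 * ε i) :=
            Finset.sum_le_sum fun i _ => h1 i
        _ = ‖s‖ + 2 * ∑ i ∈ Finset.range n, ε i := by
            rw [Finset.sum_add_distrib, hsum_a, ← Finset.mul_sum]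
        _ ≤ ‖s‖ + 2*Δ := by linarith
    have hw_sum : ∑ i ∈ Finset.range n, ‖w i‖ ≤ Real.sqrt (2*(‖s‖ + Δ)*Δ) := by
      have h1 : ∑ i ∈ Finset.range n, ‖w i‖ ≤
          ∑ i ∈ Finset.range n, Real.sqrt (2 * ‖v i‖) * Real.sqrt (ε i) := by
        refine Finset.sum_le_sum fun i _ => ?_
        rw [← Real.sqrt_mul (by positivity)]
        exact hw_norm i
      have h2 : ∑ i ∈ Finset.range n, Real.sqrt (2 * ‖v i‖) * Real.sqrt (ε i) ≤
          Real.sqrt (∑ i ∈ Finset.range n, 2 * ‖v i‖) *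
            Real.sqrt (∑ i ∈ Finset.range n, ε i) :=
        Real.sum_sqrt_mul_sqrt_le _ (fun i => by positivity) (fun i => hε i)
      have h3 : Real.sqrt (∑ i ∈ Finset.range n, 2 * ‖v i‖) ≤ Real.sqrt (2*(‖s‖ + Δ)) := by
        refine Real.sqrt_le_sqrt ?_
        rw [← Finset.mul_sum]
        linarith
      have h4 : Real.sqrt (∑ i ∈ Finset.range n, ε i) ≤ Real.sqrt Δ :=
        Real.sqrt_le_sqrt hεsum
      have h5 : Real.sqrt (2*(‖s‖ + Δ)) * Real.sqrt Δ = Real.sqrt (2*(‖s‖ + Δ)*Δ) := by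
        rw [← Real.sqrt_mul (by positivity)]
      calc ∑ i ∈ Finset.range n, ‖w i‖ ≤
            Real.sqrt (∑ i ∈ Finset.range n, 2 * ‖v i‖) *
              Real.sqrt (∑ i ∈ Finset.range n, ε i) := le_trans h1 h2
        _ ≤ Real.sqrt (2*(‖s‖ + Δ)) * Real.sqrt Δ := by
            refine mul_le_mul h3 h4 (Real.sqrt_nonneg _) (Real.sqrt_nonneg _)
        _ = Real.sqrt (2*(‖s‖ + Δ)*Δ) := h5
    have hNs : N s = ‖s‖ * N u := by
      have h1 : s = ‖s‖ • u := by
        rw [hu_def, smul_smul, mul_inv_cancel₀ hsn.ne', one_smul]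
      calc N s = N (‖s‖ • u) := by rw [← h1]
        _ = |‖s‖| * N u := hNsmul _ _
        _ = ‖s‖ * N u := by rw [abs_of_pos hsn]
    have hNu0 : 0 ≤ N u := hnn u
    calc ∑ i ∈ Finset.range n, N (v i)
        ≤ ∑ i ∈ Finset.range n, (N u * |a i| + C * ‖w i‖) :=
          Finset.sum_le_sum fun i _ => hNv i
      _ = N u * ∑ i ∈ Finset.range n, |a i| + C * ∑ i ∈ Finset.range n, ‖w i‖ := by
          rw [Finset.sum_add_distrib, ← Finset.mul_sum, ← Finset.mul_sum]
      _ ≤ N u * (‖s‖ + 2*Δ) + C * Real.sqrt (2*(‖s‖ + Δ)*Δ) := by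
          have := mul_le_mul_of_nonneg_left habs_sum hNu0
          have := mul_le_mul_of_nonneg_left hw_sum hC0.le
          linarith
      _ ≤ N s + 2*C*Δ + C * Real.sqrt (2*(‖s‖ + Δ)*Δ) := by
          rw [hNs]
          nlinarith

private lemma transfer (hN0 : ∀ x, N x = 0 ↔ x = 0)
    (hNsmul : ∀ (c : ℝ) (x), N (c • x) = |c| * N x)
    (hNadd : ∀ x y, N (x + y) ≤ N x + N y)
    (x y : EuclideanSpace ℝ (Fin d)) {δ : ℝ} (hδ : 0 < δ) :
    ∃ δ' : ℝ, 0 < δ' ∧ ∀ (a b : ℝ) (γ : ℝ → EuclideanSpace ℝ (Fin d)), a < b →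
      γ a = x → γ b = y →
      lenWith (fun v => ‖v‖) γ a b ≤ ENNReal.ofReal (‖y - x‖ + δ') →
      lenWith N γ a b ≤ ENNReal.ofReal (N (y - x) + δ) := by
  have hnn := N_nonneg hN0 hNsmul hNadd
  obtain ⟨C, hC0, hC⟩ := exists_C hN0 hNsmul hNadd
  set S : ℝ := ‖y - x‖ with hS_def
  have hS0 : 0 ≤ S := norm_nonneg _
  set K : ℝ := 2*C + C*Real.sqrt (2*(S+1)) + 1 with hK_def
  have hK : 0 < K := by positivity
  set δ' : ℝ := min 1 ((δ/K)^2) with hδ'_def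
  have hδ'0 : 0 < δ' := lt_min one_pos (by positivity)
  have hδ'1 : δ' ≤ 1 := min_le_left _ _
  refine ⟨δ', hδ'0, ?_⟩
  intro a b γ hab hax hby hlen
  -- arithmetic: the error term is at most δ
  have hsq : Real.sqrt δ' ≤ δ / K := by
    calc Real.sqrt δ' ≤ Real.sqrt ((δ/K)^2) := Real.sqrt_le_sqrt (min_le_right _ _)
      _ = δ / K := Real.sqrt_sq (by positivity)
  have hδ'sq : δ' ≤ Real.sqrt δ' := by
    have h1 : Real.sqrt δ' ≤ 1 := by
      rw [show (1:ℝ) = Real.sqrt 1 by rw [Real.sqrt_one]]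
      exact Real.sqrt_le_sqrt hδ'1
    nlinarith [Real.sq_sqrt hδ'0.le, Real.sqrt_nonneg δ']
  have hmain : 2*C*δ' + C*Real.sqrt (2*(S+δ')*δ') ≤ δ := by
    have h1 : Real.sqrt (2*(S+δ')*δ') ≤ Real.sqrt (2*(S+1)) * Real.sqrt δ' := by
      rw [← Real.sqrt_mul (by positivity)]
      exact Real.sqrt_le_sqrt (by nlinarith)
    have h2 : K * Real.sqrt δ' ≤ δ := by
      calc K * Real.sqrt δ' ≤ K * (δ/K) := mul_le_mul_of_nonneg_left hsq hK.le
        _ = δ := by field_simp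
    have h3 : 0 ≤ Real.sqrt (2*(S+1)) := Real.sqrt_nonneg _
    have h4 : 0 ≤ Real.sqrt δ' := Real.sqrt_nonneg _
    nlinarith
  -- now the length estimate
  rw [lenWith]
  refine iSup_le fun n => iSup_le fun t => ?_
  obtain ⟨t, ht_mono, ht0, htn⟩ := t
  have hn : n ≠ 0 := by
    rintro rfl
    rw [ht0] at htn
    exact hab.ne htn
  set v : ℕ → EuclideanSpace ℝ (Fin d) := fun i => γ (t (i+1)) - γ (t i) with hv_def
  have hsum_v : ∑ i ∈ Finset.range n, v i = y - x := by
    rw [hv_def, Finset.sum_range_sub (fun i => γ (t i)), htn, ht0, hax, hby]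
  have heucl : ∑ i ∈ Finset.range n, ‖v i‖ ≤ S + δ' := by
    have h0 : (∑ i ∈ Finset.range n, ENNReal.ofReal ‖v i‖) ≤
        lenWith (fun v => ‖v‖) γ a b := by
      rw [lenWith]
      exact le_iSup_of_le n (le_iSup_of_le
        (⟨t, ht_mono, ht0, htn⟩ : {t : ℕ → ℝ // Monotone t ∧ t 0 = a ∧ t n = b}) le_rfl)
    have h1 : (∑ i ∈ Finset.range n, ENNReal.ofReal ‖v i‖) ≤ ENNReal.ofReal (S + δ') :=
      le_trans h0 hlen
    rw [← ENNReal.ofReal_sum_of_nonneg (fun i _ => norm_nonneg _)] at h1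
    exact (ENNReal.ofReal_le_ofReal_iff (by positivity)).mp h1
  have hkey := key_partition hN0 hNsmul hNadd hC0 hC n v hδ'0.le
    (by rw [hsum_v]; exact heucl)
  rw [hsum_v] at hkey
  have hfinal : ∑ i ∈ Finset.range n, N (v i) ≤ N (y - x) + δ := by linarith
  calc (∑ i ∈ Finset.range n, ENNReal.ofReal (N (v i)))
      = ENNReal.ofReal (∑ i ∈ Finset.range n, N (v i)) :=
        (ENNReal.ofReal_sum_of_nonneg (fun i _ => hnn _)).symm
    _ ≤ ENNReal.ofReal (N (y - x) + δ) := ENNReal.ofReal_le_ofReal hfinal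

end Aux

/-- If `Θ ⊆ ℝ^d` is permeable w.r.t. the Euclidean norm, then it is permeable w.r.t. any
norm `N` on `ℝ^d`; the same holds for finite permeability and null permeability. -/
theorem permeable_of_euclidean_permeable {d : ℕ}
    (N : EuclideanSpace ℝ (Fin d) → ℝ)
    (hN0 : ∀ x, N x = 0 ↔ x = 0)
    (hNsmul : ∀ (c : ℝ) (x), N (c • x) = |c| * N x)
    (hNadd : ∀ x y, N (x + y) ≤ N x + N y)
    (Θ : Set (EuclideanSpace ℝ (Fin d))) :
    (PermeableWith (fun v => ‖v‖) Θ → PermeableWith N Θ) ∧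
    (FinitelyPermeableWith (fun v => ‖v‖) Θ → FinitelyPermeableWith N Θ) ∧
    (NullPermeableWith (fun v => ‖v‖) Θ → NullPermeableWith N Θ) := by
  refine ⟨?_, ?_, ?_⟩
  all_goals
    intro H x y δ hδ
    obtain ⟨δ', hδ'0, himp⟩ := transfer hN0 hNsmul hNadd x y hδ
    obtain ⟨a, b, γ, hab, hcont, hax, hby, hlen, hlast⟩ := H x y δ' hδ'0
    exact ⟨a, b, γ, hab, hcont, hax, hby, himp a b γ hab hax hby hlen, hlast⟩
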